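/- With notation as above (cyclic sequence ε : ZMod l → {−1, 0, 1}, free linear segments of level n), let m ≥ 1 and suppose (s₁, t₁) and (s₂, t₂) are two distinct free linear segments of level m + 1 of ε. Then the intervals of indices they occupy are disjoint modulo l: one cannot have s₁ < s₂ ≤ t₁ (with s₂, t₂ normalized so that s₁ ≤ s₂ < s₁ + l and t_i < s_i + l). -/
import Mathlib


/-- `(s, t)` is a free linear segment of level `n` of the cyclic sequence
`ε : ZMod l → ℤ` (indices taken modulo `l`). -/
def IsFreeSegment (l : ℕ) (ε : ZMod l → ℤ) (n : ℕ) (s t : ℤ) : Prop :=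
  s ≤ t ∧ t < s + l ∧ ε (s : ZMod l) = -1 ∧ ε (t : ZMod l) = 1 ∧
    (∑ i ∈ Finset.Icc s t, ε (i : ZMod l)) = 0 ∧
    (∀ j : ℤ, s ≤ j → j < t →
      -(n : ℤ) ≤ (∑ i ∈ Finset.Icc s j, ε (i : ZMod l)) ∧
        (∑ i ∈ Finset.Icc s j, ε (i : ZMod l)) < 0) ∧
    (∃ j₀ : ℤ, s ≤ j₀ ∧ j₀ < t ∧ (∑ i ∈ Finset.Icc s j₀, ε (i : ZMod l)) = -(n : ℤ))

private lemma sum_Icc_split (f : ℤ → ℤ) (a b c : ℤ) (h1 : a ≤ b) (h2 : b ≤ c) :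
    ∑ i ∈ Finset.Icc a c, f i
      = (∑ i ∈ Finset.Icc a (b - 1), f i) + ∑ i ∈ Finset.Icc b c, f i := by
  rw [← Finset.sum_union]
  · congr 1
    ext i
    simp only [Finset.mem_union, Finset.mem_Icc]
    omega
  · rw [Finset.disjoint_left]
    intro i hi hi'
    simp only [Finset.mem_Icc] at hi hi'
    omega

/-- Two distinct free linear segments of level `m + 1` of a cyclic `{-1,0,1}`-valued
sequence occupy disjoint intervals of indices modulo `l`: with the segments normalized
so that `s₁ < s₂ < s₁ + l`, one cannot have `s₂ ≤ t₁`. -/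
theorem freeSegments_disjoint (l : ℕ) (hl : 1 ≤ l) (ε : ZMod l → ℤ)
    (hε : ∀ i, ε i = -1 ∨ ε i = 0 ∨ ε i = 1) (m : ℕ) (hm : 1 ≤ m)
    (s₁ t₁ s₂ t₂ : ℤ) (h₁ : IsFreeSegment l ε (m + 1) s₁ t₁)
    (h₂ : IsFreeSegment l ε (m + 1) s₂ t₂)
    (hs : s₁ < s₂) (hs' : s₂ < s₁ + l) :
    ¬ s₂ ≤ t₁ := by
  intro hst
  obtain ⟨hst₁, -, -, -, hsum₁, hbnd₁, -⟩ := h₁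
  obtain ⟨hst₂, -, -, -, -, hbnd₂, j₀, hj₁, hj₂, hj₃⟩ := h₂
  have hA : (∑ i ∈ Finset.Icc s₁ (s₂ - 1), ε (i : ZMod l)) < 0 :=
    (hbnd₁ (s₂ - 1) (by omega) (by omega)).2
  by_cases hc : j₀ < t₁
  · have hlb := (hbnd₁ j₀ (by omega) hc).1
    rw [sum_Icc_split _ s₁ s₂ j₀ (by omega) (by omega), hj₃] at hlb
    push_cast at hlb
    omega
  · have ht : t₁ < t₂ := by omega
    have hub := (hbnd₂ t₁ hst ht).2
    rw [sum_Icc_split _ s₁ s₂ t₁ (by omega) hst] at hsum₁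
    omega
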